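/- Let g ≥ 1, h ≥ 1, set q = 2^h, η = 2^g - 1 and N = 2q·(η+1) + 2q - 2. For t ∈ {0,1} define a_t = C(N, t) + C(N, 2q - 1 + t) + C(N, 4q - 2 + t) + Σ_{i=1}^{η-1} C(N, 2q·(i+1) + 2q - 2 + t), b = C(N, 2q - 2) + C(N, 4q - 3) + Σ_{i=1}^{η-1} C(N, 2q·(i+1) + 2q - 3), and c_t = C(N, N - 2 + t). Then a_0 ≡ 1, a_1 ≡ 0, b + c_0 ≡ 0 and b + c_1 ≡ 1, all modulo 2. -/

import Mathlib

open Nat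

private lemma step2 (n k : ℕ) :
    Nat.choose n k % 2 = (Nat.choose (n % 2) (k % 2) * Nat.choose (n / 2) (k / 2)) % 2 := by
  haveI : Fact (Nat.Prime 2) := ⟨Nat.prime_two⟩
  exact Choose.choose_modEq_choose_mod_mul_choose_div_nat (p := 2)

private lemma parOdd (n k : ℕ) (hn : n % 2 = 0) (hk : k % 2 = 1) :
    Nat.choose n k % 2 = 0 := by
  rw [step2, hn, hk]; simp

private lemma parRed (n k : ℕ) (h : k % 2 ≤ n % 2) :
    Nat.choose n k % 2 = Nat.choose (n / 2) (k / 2) % 2 := by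
  have hs := step2 n k
  rcases Nat.mod_two_eq_zero_or_one n with h1 | h1 <;>
    rcases Nat.mod_two_eq_zero_or_one k with h2 | h2 <;>
    simp [h1, h2] at hs h ⊢ <;> simp [hs]

/-- `C(2^a, m)` is even for `0 < m < 2^a`. -/
private lemma parPow (a : ℕ) : ∀ m, 0 < m → m < 2 ^ a → Nat.choose (2 ^ a) m % 2 = 0 := by
  induction a with
  | zero => intro m h1 h2; omega
  | succ a ih =>
    intro m h1 h2
    have e1 : 2 ^ (a + 1) = 2 * 2 ^ a := by rw [pow_succ]; ring
    have p1 : 0 < 2 ^ a := Nat.pow_pos (by norm_num)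
    rcases Nat.mod_two_eq_zero_or_one m with hm | hm
    · rw [parRed _ _ (by omega)]
      have h3 : 2 ^ (a + 1) / 2 = 2 ^ a := by omega
      rw [h3]
      exact ih (m / 2) (by omega) (by omega)
    · exact parOdd _ _ (by omega) hm

/-- `C(2^(b+c) + 2^b - 1, 2^b - 1)` is odd. -/
private lemma parA (b : ℕ) : ∀ c, Nat.choose (2 ^ (b + c) + 2 ^ b - 1) (2 ^ b - 1) % 2 = 1 := by
  induction b with
  | zero => intro c; simp
  | succ b ih =>
    intro c
    have e1 : 2 ^ (b + 1 + c) = 2 * 2 ^ (b + c) := by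
      rw [show b + 1 + c = (b + c) + 1 by omega, pow_succ]; ring
    have e2 : 2 ^ (b + 1) = 2 * 2 ^ b := by rw [pow_succ]; ring
    have p1 : 0 < 2 ^ (b + c) := Nat.pow_pos (by norm_num)
    have p2 : 0 < 2 ^ b := Nat.pow_pos (by norm_num)
    rw [parRed _ _ (by omega),
      show (2 ^ (b + 1 + c) + 2 ^ (b + 1) - 1) / 2 = 2 ^ (b + c) + 2 ^ b - 1 by omega,
      show (2 ^ (b + 1) - 1) / 2 = 2 ^ b - 1 by omega]
    exact ih c

/-- `C(2^(b+c) + 2^b - 1, 2^b * (i+2) - 1)` is even when `i + 1 < 2^c`. -/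
private lemma parB (b : ℕ) : ∀ c i, i + 1 < 2 ^ c →
    Nat.choose (2 ^ (b + c) + 2 ^ b - 1) (2 ^ b * (i + 2) - 1) % 2 = 0 := by
  induction b with
  | zero =>
    intro c i hc
    have p1 : 0 < 2 ^ c := Nat.pow_pos (by norm_num)
    simp only [zero_add, pow_zero, one_mul]
    rw [show 2 ^ c + 1 - 1 = 2 ^ c by omega, show i + 2 - 1 = i + 1 by omega]
    exact parPow c (i + 1) (by omega) hc
  | succ b ih =>
    intro c i hc
    have e1 : 2 ^ (b + 1 + c) = 2 * 2 ^ (b + c) := by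
      rw [show b + 1 + c = (b + c) + 1 by omega, pow_succ]; ring
    have e2 : 2 ^ (b + 1) = 2 * 2 ^ b := by rw [pow_succ]; ring
    have e3 : 2 ^ (b + 1) * (i + 2) = 2 * (2 ^ b * (i + 2)) := by rw [e2]; ring
    have p1 : 0 < 2 ^ (b + c) := Nat.pow_pos (by norm_num)
    have p2 : 0 < 2 ^ b := Nat.pow_pos (by norm_num)
    have p3 : 0 < 2 ^ b * (i + 2) := by positivity
    rw [parRed _ _ (by omega),
      show (2 ^ (b + 1 + c) + 2 ^ (b + 1) - 1) / 2 = 2 ^ (b + c) + 2 ^ b - 1 by omega,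
      show (2 ^ (b + 1) * (i + 2) - 1) / 2 = 2 ^ b * (i + 2) - 1 by omega]
    exact ih c i hc

/-- `C(2^(b+c) + 2^b - 1, 2^b)` is even when `1 ≤ c`. -/
private lemma parC (b : ℕ) : ∀ c, 1 ≤ c →
    Nat.choose (2 ^ (b + c) + 2 ^ b - 1) (2 ^ b) % 2 = 0 := by
  induction b with
  | zero =>
    intro c hc
    have e1 : 2 ^ c = 2 * 2 ^ (c - 1) := by
      rw [← pow_succ']; congr 1; omega
    have p1 : 0 < 2 ^ (c - 1) := Nat.pow_pos (by norm_num)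
    simp only [zero_add, pow_zero]
    exact parOdd _ _ (by omega) (by omega)
  | succ b ih =>
    intro c hc
    have e1 : 2 ^ (b + 1 + c) = 2 * 2 ^ (b + c) := by
      rw [show b + 1 + c = (b + c) + 1 by omega, pow_succ]; ring
    have e2 : 2 ^ (b + 1) = 2 * 2 ^ b := by rw [pow_succ]; ring
    have p1 : 0 < 2 ^ (b + c) := Nat.pow_pos (by norm_num)
    have p2 : 0 < 2 ^ b := Nat.pow_pos (by norm_num)
    rw [parRed _ _ (by omega),
      show (2 ^ (b + 1 + c) + 2 ^ (b + 1) - 1) / 2 = 2 ^ (b + c) + 2 ^ b - 1 by omega,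
      show 2 ^ (b + 1) / 2 = 2 ^ b by omega]
    exact ih c hc

private lemma keyA (b c : ℕ) :
    Nat.choose (2 ^ (b + 1 + c) + 2 ^ (b + 1) - 2) (2 ^ (b + 1) - 2) % 2 = 1 := by
  have e1 : 2 ^ (b + 1 + c) = 2 * 2 ^ (b + c) := by
    rw [show b + 1 + c = (b + c) + 1 by omega, pow_succ]; ring
  have e2 : 2 ^ (b + 1) = 2 * 2 ^ b := by rw [pow_succ]; ring
  have p1 : 0 < 2 ^ (b + c) := Nat.pow_pos (by norm_num)
  have p2 : 0 < 2 ^ b := Nat.pow_pos (by norm_num)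
  rw [parRed _ _ (by omega),
    show (2 ^ (b + 1 + c) + 2 ^ (b + 1) - 2) / 2 = 2 ^ (b + c) + 2 ^ b - 1 by omega,
    show (2 ^ (b + 1) - 2) / 2 = 2 ^ b - 1 by omega]
  exact parA b c

private lemma keyB (b c i : ℕ) (hc : i + 1 < 2 ^ c) :
    Nat.choose (2 ^ (b + 1 + c) + 2 ^ (b + 1) - 2) (2 ^ (b + 1) * (i + 2) - 2) % 2 = 0 := by
  have e1 : 2 ^ (b + 1 + c) = 2 * 2 ^ (b + c) := by
    rw [show b + 1 + c = (b + c) + 1 by omega, pow_succ]; ring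
  have e2 : 2 ^ (b + 1) = 2 * 2 ^ b := by rw [pow_succ]; ring
  have e3 : 2 ^ (b + 1) * (i + 2) = 2 * (2 ^ b * (i + 2)) := by rw [e2]; ring
  have p1 : 0 < 2 ^ (b + c) := Nat.pow_pos (by norm_num)
  have p2 : 0 < 2 ^ b := Nat.pow_pos (by norm_num)
  have p3 : 0 < 2 ^ b * (i + 2) := by positivity
  rw [parRed _ _ (by omega),
    show (2 ^ (b + 1 + c) + 2 ^ (b + 1) - 2) / 2 = 2 ^ (b + c) + 2 ^ b - 1 by omega,
    show (2 ^ (b + 1) * (i + 2) - 2) / 2 = 2 ^ b * (i + 2) - 1 by omega]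
  exact parB b c i hc

private lemma keyC (b c : ℕ) (hc : 1 ≤ c) :
    Nat.choose (2 ^ (b + 1 + c) + 2 ^ (b + 1) - 2) (2 ^ (b + 1)) % 2 = 0 := by
  have e1 : 2 ^ (b + 1 + c) = 2 * 2 ^ (b + c) := by
    rw [show b + 1 + c = (b + c) + 1 by omega, pow_succ]; ring
  have e2 : 2 ^ (b + 1) = 2 * 2 ^ b := by rw [pow_succ]; ring
  have p1 : 0 < 2 ^ (b + c) := Nat.pow_pos (by norm_num)
  have p2 : 0 < 2 ^ b := Nat.pow_pos (by norm_num)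
  rw [parRed _ _ (by omega),
    show (2 ^ (b + 1 + c) + 2 ^ (b + 1) - 2) / 2 = 2 ^ (b + c) + 2 ^ b - 1 by omega,
    show 2 ^ (b + 1) / 2 = 2 ^ b by omega]
  exact parC b c hc

private lemma keyD (b c : ℕ) :
    Nat.choose (2 ^ (b + 1 + 1 + c) + 2 ^ (b + 1 + 1) - 2) 2 % 2 = 1 := by
  have e1 : 2 ^ (b + 1 + 1 + c) = 2 * 2 ^ (b + 1 + c) := by
    rw [show b + 1 + 1 + c = (b + 1 + c) + 1 by omega, pow_succ]; ring
  have e2 : 2 ^ (b + 1 + 1) = 2 * 2 ^ (b + 1) := by rw [pow_succ]; ring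
  have e3 : 2 ^ (b + 1 + c) = 2 * 2 ^ (b + c) := by
    rw [show b + 1 + c = (b + c) + 1 by omega, pow_succ]; ring
  have e4 : 2 ^ (b + 1) = 2 * 2 ^ b := by rw [pow_succ]; ring
  have p1 : 0 < 2 ^ (b + c) := Nat.pow_pos (by norm_num)
  have p2 : 0 < 2 ^ b := Nat.pow_pos (by norm_num)
  rw [parRed _ _ (by omega),
    show (2 ^ (b + 1 + 1 + c) + 2 ^ (b + 1 + 1) - 2) / 2 = 2 ^ (b + 1 + c) + 2 ^ (b + 1) - 1 by
      omega,
    show 2 / 2 = 1 by norm_num, Nat.choose_one_right]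
  omega

/-- For `q = 2^h`, `η = 2^g - 1`, `N = 2q(η+1) + 2q - 2` and the coefficients
`a_t`, `b`, `c_t` as defined: `a_0 ≡ 1`, `a_1 ≡ 0`, `b + c_0 ≡ 0`, `b + c_1 ≡ 1` mod 2. -/
theorem coefficients_parity (g h q η N : ℕ) (hg : 1 ≤ g) (hh : 1 ≤ h)
    (hq : q = 2 ^ h) (hη : η = 2 ^ g - 1) (hN : N = 2 * q * (η + 1) + 2 * q - 2)
    (a c : ℕ → ℕ) (b : ℕ)
    (ha : ∀ t, a t = Nat.choose N t + Nat.choose N (2 * q - 1 + t) +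
      Nat.choose N (4 * q - 2 + t) +
      ∑ i ∈ Finset.Icc 1 (η - 1), Nat.choose N (2 * q * (i + 1) + 2 * q - 2 + t))
    (hb : b = Nat.choose N (2 * q - 2) + Nat.choose N (4 * q - 3) +
      ∑ i ∈ Finset.Icc 1 (η - 1), Nat.choose N (2 * q * (i + 1) + 2 * q - 3))
    (hc : ∀ t, c t = Nat.choose N (N - 2 + t)) :
    a 0 ≡ 1 [MOD 2] ∧ a 1 ≡ 0 [MOD 2] ∧ b + c 0 ≡ 0 [MOD 2] ∧ b + c 1 ≡ 1 [MOD 2] := by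
  obtain ⟨h', rfl⟩ : ∃ k, h = k + 1 := ⟨h - 1, by omega⟩
  -- basic power facts
  have pg : 0 < 2 ^ g := Nat.pow_pos (by norm_num)
  have pg2 : 2 ≤ 2 ^ g := Nat.one_lt_two_pow_iff.mpr (by omega)
  have pP : 0 < 2 ^ (h' + 1) := Nat.pow_pos (by norm_num)
  have pQ : 0 < 2 ^ (h' + 1 + g) := Nat.pow_pos (by norm_num)
  have eP : 2 ^ (h' + 1 + 1) = 2 * 2 ^ (h' + 1) := by rw [pow_succ]; ring
  have eA : 2 ^ (h' + 1 + 1 + g) = 2 * 2 ^ (h' + 1 + g) := by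
    rw [show h' + 1 + 1 + g = (h' + 1 + g) + 1 by omega, pow_succ]; ring
  -- the value of N
  have hN2 : N = 2 ^ (h' + 1 + 1 + g) + 2 ^ (h' + 1 + 1) - 2 := by
    rw [hN, hη, hq, show 2 ^ g - 1 + 1 = 2 ^ g by omega,
      show 2 * 2 ^ (h' + 1) * 2 ^ g = 2 ^ (h' + 1 + 1 + g) by
        rw [pow_add, pow_succ]; ring,
      show 2 * 2 ^ (h' + 1) = 2 ^ (h' + 1 + 1) by rw [pow_succ]; ring]
  have hNeven : N % 2 = 0 := by omega
  have hNbig : 4 ≤ N := by omega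
  subst hq hη
  -- parities of individual binomial coefficients
  have t00 : Nat.choose N 0 % 2 = 1 := by simp
  have t01 : Nat.choose N (2 * 2 ^ (h' + 1) - 1) % 2 = 0 :=
    parOdd _ _ hNeven (by omega)
  have t02 : Nat.choose N (4 * 2 ^ (h' + 1) - 2) % 2 = 0 := by
    rw [hN2, show 4 * 2 ^ (h' + 1) - 2 = 2 ^ (h' + 1 + 1) * (0 + 2) - 2 by omega]
    exact keyB (h' + 1) g 0 (by omega)
  have t10 : Nat.choose N 1 % 2 = 0 := parOdd _ _ hNeven (by norm_num)
  have t11 : Nat.choose N (2 * 2 ^ (h' + 1) - 1 + 1) % 2 = 0 := by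
    rw [hN2, show 2 * 2 ^ (h' + 1) - 1 + 1 = 2 ^ (h' + 1 + 1) by omega]
    exact keyC (h' + 1) g hg
  have t12 : Nat.choose N (4 * 2 ^ (h' + 1) - 2 + 1) % 2 = 0 :=
    parOdd _ _ hNeven (by omega)
  have tb0 : Nat.choose N (2 * 2 ^ (h' + 1) - 2) % 2 = 1 := by
    rw [hN2, show 2 * 2 ^ (h' + 1) - 2 = 2 ^ (h' + 1 + 1) - 2 by omega]
    exact keyA (h' + 1) g
  have tb1 : Nat.choose N (4 * 2 ^ (h' + 1) - 3) % 2 = 0 :=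
    parOdd _ _ hNeven (by omega)
  have tc0 : Nat.choose N (N - 2 + 0) % 2 = 1 := by
    rw [add_zero, show N - 2 = N - 2 by rfl,
      Nat.choose_symm (show 2 ≤ N by omega), hN2]
    exact keyD h' g
  have tc1 : Nat.choose N (N - 2 + 1) % 2 = 0 :=
    parOdd _ _ hNeven (by omega)
  -- the sums
  have hsum0 : ∀ f : ℕ → ℕ, (∀ i, 1 ≤ i → i ≤ 2 ^ g - 1 - 1 → f i % 2 = 0) →
      (∑ i ∈ Finset.Icc 1 (2 ^ g - 1 - 1), f i) % 2 = 0 := by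
    intro f hr
    rw [Finset.sum_nat_mod]
    have : ∀ i ∈ Finset.Icc 1 (2 ^ g - 1 - 1), f i % 2 = 0 := by
      intro i hi
      rw [Finset.mem_Icc] at hi
      exact hr i hi.1 hi.2
    rw [Finset.sum_congr rfl this]
    simp
  have hs0 : (∑ i ∈ Finset.Icc 1 (2 ^ g - 1 - 1),
      Nat.choose N (2 * 2 ^ (h' + 1) * (i + 1) + 2 * 2 ^ (h' + 1) - 2)) % 2 = 0 := by
    apply hsum0
    intro i hi1 hi2
    have em : 2 ^ (h' + 1 + 1) * (i + 2) = 2 * 2 ^ (h' + 1) * (i + 1) + 2 * 2 ^ (h' + 1) := by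
      rw [eP]; ring
    rw [hN2, show 2 * 2 ^ (h' + 1) * (i + 1) + 2 * 2 ^ (h' + 1) - 2
        = 2 ^ (h' + 1 + 1) * (i + 2) - 2 by omega]
    exact keyB (h' + 1) g i (by omega)
  have hs1 : (∑ i ∈ Finset.Icc 1 (2 ^ g - 1 - 1),
      Nat.choose N (2 * 2 ^ (h' + 1) * (i + 1) + 2 * 2 ^ (h' + 1) - 2 + 1)) % 2 = 0 := by
    apply hsum0
    intro i hi1 hi2
    have e0 : 2 * 2 ^ (h' + 1) * (i + 1) = 2 * (2 ^ (h' + 1) * (i + 1)) := by ring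
    exact parOdd _ _ hNeven (by omega)
  have hsb : (∑ i ∈ Finset.Icc 1 (2 ^ g - 1 - 1),
      Nat.choose N (2 * 2 ^ (h' + 1) * (i + 1) + 2 * 2 ^ (h' + 1) - 3)) % 2 = 0 := by
    apply hsum0
    intro i hi1 hi2
    have e0 : 2 * 2 ^ (h' + 1) * (i + 1) = 2 * (2 ^ (h' + 1) * (i + 1)) := by ring
    have p3 : 0 < 2 ^ (h' + 1) * (i + 1) := by positivity
    exact parOdd _ _ hNeven (by omega)
  refine ⟨?_, ?_, ?_, ?_⟩
  · show a 0 % 2 = 1 % 2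
    rw [ha 0]
    simp only [add_zero]
    omega
  · show a 1 % 2 = 0 % 2
    rw [ha 1]
    omega
  · show (b + c 0) % 2 = 0 % 2
    rw [hb, hc 0]
    omega
  · show (b + c 1) % 2 = 1 % 2
    rw [hb, hc 1]
    omega
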